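/- Let (M,d) be a metric space with 2n elements, viewed as a weighted complete graph where the weight of edge uv is d(u,v). Let {u_i v_i : i = 1,…,n} be a perfect matching of minimum total weight. Then the transportation problems f_i = 1_{u_i} − 1_{v_i} are completely unrelated: for all real numbers a_1,…,a_n, ||Σ_{i=1}^n a_i(1_{u_i} − 1_{v_i})||_TC = Σ_{i=1}^n |a_i| d(u_i, v_i). Consequently TC(M) contains a subspace isometric to ℓ₁ⁿ. -/

import Mathlib

noncomputable def tcCost {M : Type*} [MetricSpace M] (f : M →₀ ℝ) : ℝ :=
  sInf {c : ℝ | ∃ (n : ℕ) (a : Fin n → ℝ) (x y : Fin n → M),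
    (∀ i, 0 ≤ a i) ∧
    f = ∑ i, a i • (Finsupp.single (x i) 1 - Finsupp.single (y i) 1) ∧
    c = ∑ i, a i * dist (x i) (y i)}

open Finset

section Aux

variable {M : Type*} [MetricSpace M] {n : ℕ}

/-- Cost of the walk starting at `y`, visiting `u i₁` (paying the distance), jumping to
`v i₁` (gaining `dist (u i₁) (v i₁)`), then `u i₂`, ..., finally going to `x`. -/
noncomputable def ccost (u v : Fin n → M) : M → List (Fin n) → M → ℝ
  | y, [], x => dist y x
  | y, i :: c, x => dist y (u i) - dist (u i) (v i) + ccost u v (v i) c x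

/-- Cost of the chain starting directly at `u i₁` with a jump. -/
noncomputable def chcost (u v : Fin n → M) : List (Fin n) → M → ℝ
  | [], _ => 0
  | i :: c, x => -dist (u i) (v i) + ccost u v (v i) c x

lemma ccost_lb (u v : Fin n → M) :
    ∀ (c : List (Fin n)) (y x : M),
      -(c.map (fun i => dist (u i) (v i))).sum ≤ ccost u v y c x
  | [], y, x => by simpa [ccost] using dist_nonneg
  | i :: c, y, x => by
      have h1 := ccost_lb u v c (v i) x
      have h2 : (0:ℝ) ≤ dist y (u i) := dist_nonneg
      simp only [ccost, List.map_cons, List.sum_cons, neg_add]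
      linarith

lemma chcost_lb [Fintype M] (u v : Fin n → M) {c : List (Fin n)} (hc : c.Nodup) (x : M) :
    -(∑ i, dist (u i) (v i)) ≤ chcost u v c x := by
  have hsum : (c.map (fun i => dist (u i) (v i))).sum ≤ ∑ i, dist (u i) (v i) := by
    rw [← List.sum_toFinset _ hc]
    exact Finset.sum_le_sum_of_subset_of_nonneg (Finset.subset_univ _)
      (fun i _ _ => dist_nonneg)
  cases c with
  | nil =>
      have : (0:ℝ) ≤ ∑ i, dist (u i) (v i) :=
        Finset.sum_nonneg fun i _ => dist_nonneg
      simpa [chcost] using this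
  | cons i c =>
      have h1 := ccost_lb u v c (v i) x
      simp only [List.map_cons, List.sum_cons] at hsum
      simp only [chcost]
      linarith

variable [Fintype M]

def potSet (u v : Fin n → M) (x : M) : Set ℝ :=
  {r | ∃ c : List (Fin n), c.Nodup ∧ r = chcost u v c x}

noncomputable def pot (u v : Fin n → M) (x : M) : ℝ := sInf (potSet u v x)

lemma potSet_nonempty (u v : Fin n → M) (x : M) : (potSet u v x).Nonempty :=
  ⟨chcost u v [] x, [], List.nodup_nil, rfl⟩

lemma potSet_bdd (u v : Fin n → M) (x : M) : BddBelow (potSet u v x) :=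
  ⟨-(∑ i, dist (u i) (v i)), fun _ ⟨c, hc, hr⟩ => hr ▸ chcost_lb u v hc x⟩

lemma pot_le (u v : Fin n → M) {c : List (Fin n)} (hc : c.Nodup) (x : M) :
    pot u v x ≤ chcost u v c x :=
  csInf_le (potSet_bdd u v x) ⟨c, hc, rfl⟩

lemma le_pot (u v : Fin n → M) {r : ℝ} {x : M}
    (h : ∀ c : List (Fin n), c.Nodup → r ≤ chcost u v c x) : r ≤ pot u v x :=
  le_csInf (potSet_nonempty u v x) (fun _ ⟨c, hc, hb⟩ => hb ▸ h c hc)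

lemma ccost_tri (u v : Fin n → M) :
    ∀ (c : List (Fin n)) (y z x : M), ccost u v y c x ≤ ccost u v y c z + dist z x
  | [], y, z, x => dist_triangle y z x
  | i :: c, y, z, x => by
      have := ccost_tri u v c (v i) z x
      simp only [ccost]; linarith

lemma chcost_tri (u v : Fin n → M) (c : List (Fin n)) (z x : M) :
    chcost u v c x ≤ chcost u v c z + dist z x := by
  cases c with
  | nil => simpa [chcost] using dist_nonneg
  | cons i c =>
      have := ccost_tri u v c (v i) z x
      simp only [chcost]; linarith

lemma pot_lip (u v : Fin n → M) (z x : M) : pot u v x ≤ pot u v z + dist z x := by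
  rw [← sub_le_iff_le_add]
  refine le_pot u v (fun c hc => ?_)
  rw [sub_le_iff_le_add]
  exact (pot_le u v hc x).trans (chcost_tri u v c z x)

lemma ccost_split (u v : Fin n → M) (i : Fin n) (c₂ : List (Fin n)) :
    ∀ (c₁ : List (Fin n)) (y x : M),
      ccost u v y (c₁ ++ i :: c₂) x
        = ccost u v y c₁ (u i) - dist (u i) (v i) + ccost u v (v i) c₂ x
  | [], y, x => by simp [ccost]
  | j :: c₁, y, x => by
      simp only [List.cons_append, ccost, List.append_eq]
      rw [ccost_split u v i c₂ c₁]
      ring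

lemma chcost_split (u v : Fin n → M) (i : Fin n) (c₂ c₁ : List (Fin n)) (x : M) :
    chcost u v (c₁ ++ i :: c₂) x
      = chcost u v c₁ (u i) - dist (u i) (v i) + ccost u v (v i) c₂ x := by
  cases c₁ with
  | nil => simp [chcost]
  | cons j c₁ =>
      simp only [List.cons_append, chcost, List.append_eq]
      rw [ccost_split u v i c₂ c₁]
      ring

lemma chain_sum_eq (u v : Fin n → M) :
    ∀ (c : List (Fin n)) (a z : Fin n), (a :: c).Nodup →
      ((a :: c).map (fun i => dist (v i) (u (List.nextOr (a :: c) i z)))).sum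
        = ccost u v (v a) c (u z) + (c.map (fun i => dist (u i) (v i))).sum
  | [], a, z, _ => by simp [ccost]
  | b :: c, a, z, h => by
      have ha : a ∉ b :: c := (List.nodup_cons.mp h).1
      have h' : (b :: c).Nodup := (List.nodup_cons.mp h).2
      have key : ((b :: c).map
            (fun i => dist (v i) (u (List.nextOr (a :: b :: c) i z)))).sum
          = ((b :: c).map (fun i => dist (v i) (u (List.nextOr (b :: c) i z)))).sum := by
        refine congrArg _ (List.map_congr_left (fun i hi => ?_))
        rw [List.nextOr_cons_of_ne _ _ _ _ (fun hia => ha (by rw [← hia]; exact hi))]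
      have IH := chain_sum_eq u v c b z h'
      simp only [List.map_cons, List.sum_cons] at key IH ⊢
      rw [List.nextOr_self_cons_cons, key, IH]
      simp only [ccost]
      ring

end Aux

section Matching

variable {M : Type*} [MetricSpace M] [Fintype M] {n : ℕ}

lemma cycle_ineq {u v : Fin n → M} (hmatch : Function.Bijective (Sum.elim u v))
    (hmin : ∀ u' v' : Fin n → M, Function.Bijective (Sum.elim u' v') →
      ∑ i, dist (u i) (v i) ≤ ∑ i, dist (u' i) (v' i))
    (a : Fin n) (c : List (Fin n)) (hL : (a :: c).Nodup) :
    dist (u a) (v a) ≤ ccost u v (v a) c (u a) := by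
  classical
  set L : List (Fin n) := a :: c with hLdef
  have hρmem : ∀ i, i ∈ L → L.formPerm i ∈ L := fun i hi =>
    List.formPerm_apply_mem_of_mem hi
  have hρinj : Function.Injective L.formPerm := (L.formPerm).injective
  set u' : Fin n → M := fun i => if i ∈ L then v i else u i with hu'
  set v' : Fin n → M := fun i => if i ∈ L then u (L.formPerm i) else v i with hv'
  set π : Fin n ⊕ Fin n → Fin n ⊕ Fin n := fun s =>
    match s with
    | .inl i => if i ∈ L then .inr i else .inl i
    | .inr i => if i ∈ L then .inl (L.formPerm i) else .inr i
    with hπ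
  have hcomp : Sum.elim u' v' = Sum.elim u v ∘ π := by
    funext s
    rcases s with i | i
    · by_cases h : i ∈ L <;> simp [hu', hπ, h]
    · by_cases h : i ∈ L <;> simp [hv', hπ, h]
  have hπinj : Function.Injective π := by
    intro s t hst
    rcases s with i | i <;> rcases t with j | j <;> simp only [hπ] at hst
    · by_cases hi : i ∈ L
      · by_cases hj : j ∈ L
        · rw [if_pos hi, if_pos hj] at hst
          injection hst with h; exact congrArg Sum.inl h
        · rw [if_pos hi, if_neg hj] at hst; injection hst
      · by_cases hj : j ∈ L
        · rw [if_neg hi, if_pos hj] at hst; injection hst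
        · rw [if_neg hi, if_neg hj] at hst; exact hst
    · by_cases hi : i ∈ L
      · by_cases hj : j ∈ L
        · rw [if_pos hi, if_pos hj] at hst; injection hst
        · rw [if_pos hi, if_neg hj] at hst
          injection hst with h; exact absurd (h ▸ hi) hj
      · by_cases hj : j ∈ L
        · rw [if_neg hi, if_pos hj] at hst
          injection hst with h
          refine absurd ?_ hi
          rw [h]; exact hρmem j hj
        · rw [if_neg hi, if_neg hj] at hst; injection hst
    · by_cases hi : i ∈ L
      · by_cases hj : j ∈ L
        · rw [if_pos hi, if_pos hj] at hst; injection hst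
        · rw [if_pos hi, if_neg hj] at hst
          injection hst with h
          refine absurd ?_ hj
          rw [← h]; exact hρmem i hi
      · by_cases hj : j ∈ L
        · rw [if_neg hi, if_pos hj] at hst
          injection hst with h
          refine absurd ?_ hi
          rw [h]; exact hj
        · rw [if_neg hi, if_neg hj] at hst; injection hst
    · by_cases hi : i ∈ L
      · by_cases hj : j ∈ L
        · rw [if_pos hi, if_pos hj] at hst
          injection hst with h; exact congrArg Sum.inr (hρinj h)
        · rw [if_pos hi, if_neg hj] at hst; injection hst
      · by_cases hj : j ∈ L
        · rw [if_neg hi, if_pos hj] at hst; injection hst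
        · rw [if_neg hi, if_neg hj] at hst
          injection hst with h; exact congrArg Sum.inr h
  have hbij : Function.Bijective (Sum.elim u' v') := by
    rw [hcomp]
    exact hmatch.comp (Finite.injective_iff_bijective.mp hπinj)
  have hm := hmin u' v' hbij
  have hw : ∑ i, dist (u' i) (v' i)
      = (∑ i ∈ univ.filter (· ∈ L), dist (v i) (u (L.formPerm i)))
        + ∑ i ∈ univ.filter (fun i => ¬ i ∈ L), dist (u i) (v i) := by
    rw [← Finset.sum_filter_add_sum_filter_not univ (· ∈ L)]
    congr 1
    · refine Finset.sum_congr rfl fun i hi => ?_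
      have h2 := (Finset.mem_filter.mp hi).2
      simp [hu', hv', h2]
    · refine Finset.sum_congr rfl fun i hi => ?_
      have h2 := (Finset.mem_filter.mp hi).2
      simp [hu', hv', h2]
  have hw0 : ∑ i, dist (u i) (v i)
      = (∑ i ∈ univ.filter (· ∈ L), dist (u i) (v i))
        + ∑ i ∈ univ.filter (fun i => ¬ i ∈ L), dist (u i) (v i) :=
    (Finset.sum_filter_add_sum_filter_not _ _ _).symm
  have key : ∑ i ∈ univ.filter (· ∈ L), dist (u i) (v i)
      ≤ ∑ i ∈ univ.filter (· ∈ L), dist (v i) (u (L.formPerm i)) := by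
    rw [hw0, hw] at hm; linarith
  have hfilter : univ.filter (· ∈ L) = L.toFinset := by
    ext i; simp
  rw [hfilter, List.sum_toFinset _ hL, List.sum_toFinset _ hL] at key
  have hnext : ∀ i ∈ L, u (L.formPerm i) = u (List.nextOr L i a) := by
    intro i hi
    rw [List.formPerm_apply_mem_eq_next hL i hi]
    rfl
  have hmapeq : List.map (fun i => dist (v i) (u (L.formPerm i))) L
      = List.map (fun i => dist (v i) (u (List.nextOr L i a))) L :=
    List.map_congr_left (fun i hi => by rw [hnext i hi])
  rw [hmapeq] at key
  rw [hLdef] at key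
  rw [chain_sum_eq u v c a a hL] at key
  simp only [List.map_cons, List.sum_cons] at key
  linarith

lemma exists_potential {u v : Fin n → M} (hmatch : Function.Bijective (Sum.elim u v))
    (hmin : ∀ u' v' : Fin n → M, Function.Bijective (Sum.elim u' v') →
      ∑ i, dist (u i) (v i) ≤ ∑ i, dist (u' i) (v' i)) :
    ∃ g : M → ℝ, (∀ x y : M, g x - g y ≤ dist x y) ∧
      ∀ i, g (u i) - g (v i) = dist (u i) (v i) := by
  refine ⟨pot u v, fun x y => ?_, fun i => ?_⟩
  · have := pot_lip u v y x
    rw [dist_comm y x] at this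
    linarith
  · have h1 : pot u v (u i) - pot u v (v i) ≤ dist (u i) (v i) := by
      have := pot_lip u v (v i) (u i)
      rw [dist_comm (v i) (u i)] at this
      linarith
    have h2 : pot u v (v i) ≤ pot u v (u i) - dist (u i) (v i) := by
      rw [le_sub_iff_add_le]
      refine le_csInf (potSet_nonempty u v (u i)) ?_
      rintro r ⟨c, hc, rfl⟩
      rw [← le_sub_iff_add_le]
      by_cases hic : i ∈ c
      · obtain ⟨c₁, c₂, rfl⟩ := List.append_of_mem hic
        have h1' : (c₁ ++ [i]).Nodup := by
          refine hc.sublist ?_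
          refine List.Sublist.append_left ?_ c₁
          exact List.cons_sublist_cons.mpr (List.nil_sublist _)
        have h2' : (i :: c₂).Nodup := hc.sublist (List.sublist_append_right _ _)
        have h3 := pot_le u v h1' (v i)
        rw [chcost_split u v i [] c₁ (v i)] at h3
        simp only [ccost, dist_self, add_zero] at h3
        have h4 := cycle_ineq hmatch hmin i c₂ h2'
        rw [chcost_split u v i c₂ c₁ (u i)]
        linarith
      · have hnd : (c ++ [i]).Nodup := by
          rw [List.nodup_append]
          exact ⟨hc, List.nodup_singleton i, by simpa using fun (a : Fin n) (ha : a ∈ c) (h : a = i) => hic (h ▸ ha)⟩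
        have h3 := pot_le u v hnd (v i)
        rw [chcost_split u v i [] c (v i)] at h3
        simp only [ccost, dist_self, add_zero] at h3
        linarith
    have h3 := pot_lip u v (u i) (v i)
    linarith

end Matching

section Eval

variable {M : Type*} [MetricSpace M]

noncomputable def evalg (g : M → ℝ) : (M →₀ ℝ) →ₗ[ℝ] ℝ where
  toFun f := f.sum fun x r => r * g x
  map_add' f₁ f₂ := Finsupp.sum_add_index' (fun x => zero_mul (g x))
    (fun x r s => add_mul r s (g x))
  map_smul' t f := by
    rw [RingHom.id_apply, smul_eq_mul, Finsupp.mul_sum,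
      Finsupp.sum_smul_index (fun x => zero_mul (g x))]
    exact Finsupp.sum_congr fun x _ => mul_assoc t _ (g x)

@[simp] lemma evalg_apply (g : M → ℝ) (f : M →₀ ℝ) :
    evalg g f = f.sum fun x r => r * g x := rfl

lemma evalg_pair (g : M → ℝ) (p q : M) :
    evalg g (Finsupp.single p (1:ℝ) - Finsupp.single q 1) = g p - g q := by
  rw [map_sub]
  simp only [evalg_apply]
  rw [Finsupp.sum_single_index (zero_mul (g p)), Finsupp.sum_single_index (zero_mul (g q))]
  ring

end Eval

section Main

variable {M : Type*} [MetricSpace M] [Fintype M] {n : ℕ}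

lemma tc_eq (u v : Fin n → M) (hmatch : Function.Bijective (Sum.elim u v))
    (hmin : ∀ u' v' : Fin n → M, Function.Bijective (Sum.elim u' v') →
      ∑ i, dist (u i) (v i) ≤ ∑ i, dist (u' i) (v' i))
    (a : Fin n → ℝ) :
    tcCost (∑ i, a i • (Finsupp.single (u i) 1 - Finsupp.single (v i) 1))
      = ∑ i, |a i| * dist (u i) (v i) := by
  classical
  set U : Fin n → M := fun i => if 0 ≤ a i then u i else v i with hU
  set V : Fin n → M := fun i => if 0 ≤ a i then v i else u i with hV
  set σ : Fin n ⊕ Fin n → Fin n ⊕ Fin n := fun s =>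
    match s with
    | .inl i => if 0 ≤ a i then .inl i else .inr i
    | .inr i => if 0 ≤ a i then .inr i else .inl i
    with hσdef
  have hσinv : Function.Involutive σ := by
    intro s
    rcases s with i | i <;> by_cases h : 0 ≤ a i <;> simp [hσdef, h]
  have hcompσ : Sum.elim U V = Sum.elim u v ∘ σ := by
    funext s
    rcases s with i | i
    · by_cases h : 0 ≤ a i <;> simp [hU, hσdef, h]
    · by_cases h : 0 ≤ a i <;> simp [hV, hσdef, h]
  have hUV : Function.Bijective (Sum.elim U V) := by
    rw [hcompσ]; exact hmatch.comp hσinv.bijective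
  have hminUV : ∀ u' v' : Fin n → M, Function.Bijective (Sum.elim u' v') →
      ∑ i, dist (U i) (V i) ≤ ∑ i, dist (u' i) (v' i) := by
    intro u' v' h
    have he : ∑ i, dist (U i) (V i) = ∑ i, dist (u i) (v i) :=
      Finset.sum_congr rfl fun i _ => by
        by_cases hh : 0 ≤ a i <;> simp [hU, hV, hh, dist_comm]
    rw [he]; exact hmin u' v' h
  obtain ⟨g, hg1, hg2⟩ := exists_potential hUV hminUV
  have hdistUV : ∀ i, dist (U i) (V i) = dist (u i) (v i) := fun i => by
    by_cases hh : 0 ≤ a i <;> simp [hU, hV, hh, dist_comm]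
  have hgd : ∀ i, a i * (g (u i) - g (v i)) = |a i| * dist (u i) (v i) := by
    intro i
    by_cases hh : 0 ≤ a i
    · have := hg2 i
      rw [hdistUV i] at this
      simp only [hU, hV, if_pos hh] at this
      rw [this, abs_of_nonneg hh]
    · have := hg2 i
      rw [hdistUV i] at this
      simp only [hU, hV, if_neg hh] at this
      rw [abs_of_neg (lt_of_not_ge hh)]
      nlinarith [this]
  have hmem : (∑ i, |a i| * dist (u i) (v i)) ∈
      {c : ℝ | ∃ (m : ℕ) (b : Fin m → ℝ) (x y : Fin m → M),
        (∀ j, 0 ≤ b j) ∧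
        (∑ i, a i • (Finsupp.single (u i) (1:ℝ) - Finsupp.single (v i) 1))
          = ∑ j, b j • (Finsupp.single (x j) (1:ℝ) - Finsupp.single (y j) 1) ∧
        c = ∑ j, b j * dist (x j) (y j)} := by
    refine ⟨n, fun i => |a i|, U, V, fun i => abs_nonneg _, ?_, ?_⟩
    · refine Finset.sum_congr rfl fun i _ => ?_
      by_cases hh : 0 ≤ a i
      · simp [hU, hV, hh, abs_of_nonneg hh]
      · simp only [hU, hV, if_neg hh, abs_of_neg (lt_of_not_ge hh), neg_smul]
        rw [smul_sub, smul_sub]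
        abel
    · exact Finset.sum_congr rfl fun i _ => by rw [hdistUV i]
  unfold tcCost
  refine le_antisymm (csInf_le ?_ hmem) (le_csInf ⟨_, hmem⟩ ?_)
  · refine ⟨0, ?_⟩
    rintro r ⟨m, b, x, y, hb, _, rfl⟩
    exact Finset.sum_nonneg fun j _ => mul_nonneg (hb j) dist_nonneg
  · rintro r ⟨m, b, x, y, hb, hf, rfl⟩
    have hL := congrArg (evalg g) hf
    rw [map_sum, map_sum] at hL
    simp only [map_smul, evalg_pair, smul_eq_mul] at hL
    have hLHS : ∑ i, a i * (g (u i) - g (v i)) = ∑ i, |a i| * dist (u i) (v i) :=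
      Finset.sum_congr rfl fun i _ => hgd i
    have hRHS : ∑ j, b j * (g (x j) - g (y j)) ≤ ∑ j, b j * dist (x j) (y j) :=
      Finset.sum_le_sum fun j _ =>
        mul_le_mul_of_nonneg_left (hg1 (x j) (y j)) (hb j)
    rw [hLHS] at hL
    linarith [hL, hRHS]

end Main

noncomputable def Tmap {M : Type*} [MetricSpace M] {n : ℕ} (u v : Fin n → M) :
    (Fin n → ℝ) →ₗ[ℝ] (M →₀ ℝ) where
  toFun a := ∑ i, (a i / dist (u i) (v i)) •
    (Finsupp.single (u i) (1:ℝ) - Finsupp.single (v i) 1)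
  map_add' a b := by
    rw [← Finset.sum_add_distrib]
    exact Finset.sum_congr rfl fun i _ => by rw [Pi.add_apply, add_div, add_smul]
  map_smul' t a := by
    rw [RingHom.id_apply, Finset.smul_sum]
    exact Finset.sum_congr rfl fun i _ => by
      rw [Pi.smul_apply, smul_eq_mul, mul_div_assoc, mul_smul]

lemma Tmap_apply {M : Type*} [MetricSpace M] {n : ℕ} (u v : Fin n → M) (a : Fin n → ℝ) :
    Tmap u v a = ∑ i, (a i / dist (u i) (v i)) •
      (Finsupp.single (u i) (1:ℝ) - Finsupp.single (v i) 1) := rfl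

theorem min_matching_gives_ell1 {M : Type*} [MetricSpace M] [Fintype M]
    (n : ℕ) (hcard : Fintype.card M = 2 * n)
    (u v : Fin n → M) (hmatch : Function.Bijective (Sum.elim u v))
    (hmin : ∀ u' v' : Fin n → M, Function.Bijective (Sum.elim u' v') →
      ∑ i, dist (u i) (v i) ≤ ∑ i, dist (u' i) (v' i)) :
    (∀ a : Fin n → ℝ,
        tcCost (∑ i, a i • (Finsupp.single (u i) 1 - Finsupp.single (v i) 1))
          = ∑ i, |a i| * dist (u i) (v i)) ∧
    ∃ T : (Fin n → ℝ) →ₗ[ℝ] (M →₀ ℝ),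
      (∀ a, (T a).sum (fun _ r => r) = 0) ∧
      ∀ a, tcCost (T a) = ∑ i, |a i| := by
  have hd : ∀ i, (0:ℝ) < dist (u i) (v i) := by
    intro i
    rw [dist_pos]
    intro h
    have h2 : Sum.elim u v (Sum.inl i) = Sum.elim u v (Sum.inr i) := by simpa using h
    have := hmatch.injective h2
    simp at this
  refine ⟨tc_eq u v hmatch hmin, ?_⟩
  refine ⟨Tmap u v, ?_, ?_⟩
  · intro a
    rw [Tmap_apply]
    have h1 : (∑ i, (a i / dist (u i) (v i)) •
        (Finsupp.single (u i) (1:ℝ) - Finsupp.single (v i) 1)).sum (fun _ r => r)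
        = evalg (fun _ => (1:ℝ)) (∑ i, (a i / dist (u i) (v i)) •
          (Finsupp.single (u i) (1:ℝ) - Finsupp.single (v i) 1)) := by
      rw [evalg_apply]
      simp [Finsupp.sum]
    rw [h1, map_sum]
    simp only [map_smul, evalg_pair, smul_eq_mul, sub_self, mul_zero]
    exact Finset.sum_const_zero
  · intro a
    rw [Tmap_apply]
    have h2 := tc_eq u v hmatch hmin (fun i => a i / dist (u i) (v i))
    refine Eq.trans h2 ?_
    refine Finset.sum_congr rfl fun i _ => ?_
    rw [abs_div, abs_of_nonneg dist_nonneg, div_mul_cancel₀ _ (hd i).ne']
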